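/- Let ε be a real random variable with E[ε] = 0 and E[ε²] ≤ M, and let ψ : ℝ → ℝ satisfy ψ(x) ≤ log(1 + x + x²) for all x. Then for every t > 0, P(ψ(tε/2) ≥ Mt²) ≤ (1 + Mt²/4) exp(−Mt²) ≤ exp(−Mt²/2). -/

import Mathlib

open MeasureTheory

/-- Sub-Gaussian-type tail of the truncated score under a second-moment bound:
    P(ψ(tε/2) ≥ Mt²) ≤ (1+Mt²/4)·exp(−Mt²) ≤ exp(−Mt²/2). -/
theorem truncated_score_tail {Ω : Type*} [MeasurableSpace Ω]
    (μ : Measure Ω) [IsProbabilityMeasure μ]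
    (ε : Ω → ℝ) (hmeas : Measurable ε)
    (hint : Integrable ε μ) (hint2 : Integrable (fun ω => (ε ω)^2) μ)
    (ψ : ℝ → ℝ) (hψmeas : Measurable ψ)
    (hψ : ∀ x : ℝ, ψ x ≤ Real.log (1 + x + x^2))
    (M : ℝ) (hmean : ∫ ω, ε ω ∂μ = 0) (hvar : ∫ ω, (ε ω)^2 ∂μ ≤ M)
    (t : ℝ) (ht : 0 < t) :
    (μ {ω | M * t^2 ≤ ψ (t * ε ω / 2)}).toReal
        ≤ (1 + M * t^2 / 4) * Real.exp (-(M * t^2)) ∧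
    (1 + M * t^2 / 4) * Real.exp (-(M * t^2)) ≤ Real.exp (-(M * t^2) / 2) := by
  have hM0 : 0 ≤ M := le_trans (integral_nonneg fun ω => sq_nonneg _) hvar
  have hc0 : 0 ≤ M * t ^ 2 := by positivity
  have hpos : ∀ x : ℝ, (0:ℝ) < 1 + x + x ^ 2 := fun x => by nlinarith [sq_nonneg (x + 1/2)]
  have hexp : ∀ x, Real.exp (ψ x) ≤ 1 + x + x ^ 2 := fun x =>
    (Real.exp_le_exp.2 (hψ x)).trans_eq (Real.exp_log (hpos x))
  -- dominating function
  have hg : Integrable (fun ω => 1 + (t/2) * ε ω + (t/2)^2 * (ε ω)^2) μ :=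
    ((integrable_const 1).add (hint.const_mul (t/2))).add (hint2.const_mul ((t/2)^2))
  have hf : Integrable (fun ω => Real.exp (ψ (t * ε ω / 2))) μ := by
    refine hg.mono' ?_ ?_
    · exact (Real.measurable_exp.comp (hψmeas.comp
        ((hmeas.const_mul t).div_const 2))).aestronglyMeasurable
    · refine Filter.Eventually.of_forall fun ω => ?_
      rw [Real.norm_eq_abs, abs_of_nonneg (Real.exp_pos _).le]
      have := hexp (t * ε ω / 2)
      nlinarith [this]
  have hint_bound : ∫ ω, Real.exp (ψ (t * ε ω / 2)) ∂μ ≤ 1 + M * t ^ 2 / 4 := by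
    have h1 : ∫ ω, Real.exp (ψ (t * ε ω / 2)) ∂μ
        ≤ ∫ ω, (1 + (t/2) * ε ω + (t/2)^2 * (ε ω)^2) ∂μ := by
      refine integral_mono hf hg fun ω => ?_
      have := hexp (t * ε ω / 2)
      nlinarith [this]
    have hga : Integrable (fun ω => 1 + (t/2) * ε ω) μ :=
      (integrable_const 1).add (hint.const_mul (t/2))
    have h2 : ∫ ω, (1 + (t/2) * ε ω + (t/2)^2 * (ε ω)^2) ∂μ
        = 1 + (t/2)^2 * ∫ ω, (ε ω)^2 ∂μ := by
      rw [integral_add hga (hint2.const_mul ((t/2)^2)),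
        integral_add (integrable_const 1) (hint.const_mul (t/2)),
        integral_const, integral_const_mul, integral_const_mul, hmean]
      simp
    have h3 : (t/2)^2 * ∫ ω, (ε ω)^2 ∂μ ≤ M * t^2 / 4 := by
      have : (t/2)^2 * ∫ ω, (ε ω)^2 ∂μ ≤ (t/2)^2 * M :=
        mul_le_mul_of_nonneg_left hvar (by positivity)
      nlinarith
    linarith [h1, h2.le, h2.ge]
  constructor
  · have hsets : {ω | M * t^2 ≤ ψ (t * ε ω / 2)}
        = {ω | Real.exp (M * t^2) ≤ Real.exp (ψ (t * ε ω / 2))} := by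
      ext ω; simp [Real.exp_le_exp]
    have hmarkov := mul_meas_ge_le_integral_of_nonneg
      (Filter.Eventually.of_forall fun ω => (Real.exp_pos _).le) hf (Real.exp (M * t^2))
    rw [← hsets] at hmarkov
    have h := mul_le_mul_of_nonneg_right (hmarkov.trans hint_bound)
      (Real.exp_pos (-(M * t^2))).le
    have e : Real.exp (M * t^2) * (μ {ω | M * t^2 ≤ ψ (t * ε ω / 2)}).toReal
        * Real.exp (-(M * t^2)) = (μ {ω | M * t^2 ≤ ψ (t * ε ω / 2)}).toReal := by
      rw [mul_comm (Real.exp (M * t^2)) _, mul_assoc, ← Real.exp_add]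
      simp
    rw [measureReal_def] at h
    linarith [h, e.ge, e.le]
  · have h1 : 1 + M * t^2 / 4 ≤ Real.exp (M * t^2 / 2) := by
      have := Real.add_one_le_exp (M * t^2 / 2)
      nlinarith [hc0]
    calc (1 + M * t^2 / 4) * Real.exp (-(M * t^2))
        ≤ Real.exp (M * t^2 / 2) * Real.exp (-(M * t^2)) :=
          mul_le_mul_of_nonneg_right h1 (Real.exp_pos _).le
      _ = Real.exp (-(M * t^2) / 2) := by rw [← Real.exp_add]; ring_nf
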